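/- arXiv:2604.27909 — 3 statements merged into one kernel-verified Lean document; each statement's English description precedes it below -/
import Mathlib

section
/- Let q ≥ 2, m ≥ n ≥ d−1 ≥ 0 be integers. Then ∑_{j=0}^{n−d+1} ( ∏_{i=0}^{j−1} ((q^{n−i}−1)(q^m−q^i))/(q^{i+1}−1) · ∏_{i=n−d+2}^{n} (q^{i−j}−1)/(q^i−1) ) = q^{m(n−d+1)}. -/
open Finset

private lemma aux_ne (q k : ℕ) (hq : 2 ≤ q) (hk : 1 ≤ k) : ((q:ℚ)^k - 1) ≠ 0 := by
  have h1 : (1:ℚ) < (q:ℚ) := by exact_mod_cast hq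
  have h2 : (1:ℚ) < (q:ℚ)^k := one_lt_pow₀ h1 (by omega)
  linarith

private def G (q N j : ℕ) : ℚ :=
  ∏ i ∈ Finset.range j, (((q:ℚ)^(N-i) - 1) / ((q:ℚ)^(i+1) - 1))

private def P (q : ℕ) (x : ℚ) (j : ℕ) : ℚ :=
  ∏ i ∈ Finset.range j, (x - (q:ℚ)^i)

private lemma G_zero (q N : ℕ) : G q N 0 = 1 := by simp [G]

private lemma P_zero (q : ℕ) (x : ℚ) : P q x 0 = 1 := by simp [P]

private lemma P_succ (q : ℕ) (x : ℚ) (j : ℕ) :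
    P q x (j+1) = P q x j * (x - (q:ℚ)^j) := Finset.prod_range_succ _ _

private lemma G_top (q N : ℕ) : G q N (N+1) = 0 := by
  apply Finset.prod_eq_zero (Finset.self_mem_range_succ N)
  simp

private lemma pascal (q N j : ℕ) (hq : 2 ≤ q) (hj : j ≤ N) :
    G q (N+1) (j+1) = G q N j + (q:ℚ)^(j+1) * G q N (j+1) := by
  unfold G
  rw [prod_div_distrib, prod_div_distrib, prod_div_distrib]
  have hnum1 : (∏ i ∈ range (j+1), ((q:ℚ)^(N+1-i)-1))
      = (∏ i ∈ range j, ((q:ℚ)^(N-i)-1)) * ((q:ℚ)^(N+1)-1) := by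
    rw [Finset.prod_range_succ' (fun i => ((q:ℚ)^(N+1-i)-1)) j]
    simp [Nat.succ_sub_succ]
  have hnum2 : (∏ i ∈ range (j+1), ((q:ℚ)^(N-i)-1))
      = (∏ i ∈ range j, ((q:ℚ)^(N-i)-1)) * ((q:ℚ)^(N-j)-1) :=
    Finset.prod_range_succ _ _
  have hden : (∏ i ∈ range (j+1), ((q:ℚ)^(i+1)-1))
      = (∏ i ∈ range j, ((q:ℚ)^(i+1)-1)) * ((q:ℚ)^(j+1)-1) :=
    Finset.prod_range_succ _ _
  have hD : (∏ i ∈ range j, ((q:ℚ)^(i+1)-1)) ≠ 0 :=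
    Finset.prod_ne_zero_iff.mpr fun i _ => aux_ne q (i+1) hq (by omega)
  have hd1 : ((q:ℚ)^(j+1)-1) ≠ 0 := aux_ne q (j+1) hq (by omega)
  have hpow : (q:ℚ)^(N+1) = (q:ℚ)^(j+1) * (q:ℚ)^(N-j) := by
    rw [← pow_add]; congr 1; omega
  rw [hnum1, hnum2, hden, hpow]
  field_simp
  ring

private lemma key_sum (q : ℕ) (hq : 2 ≤ q) (x : ℚ) (N : ℕ) :
    ∑ j ∈ range (N+1), G q N j * P q x j = x^N := by
  induction N with
  | zero => simp [G_zero, P_zero]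
  | succ N ih =>
    have h0 : ∑ j ∈ range (N+2), G q (N+1) j * P q x j
        = (∑ k ∈ range (N+1), G q (N+1) (k+1) * P q x (k+1)) + 1 := by
      rw [Finset.sum_range_succ' (fun j => G q (N+1) j * P q x j) (N+1)]
      simp [G_zero, P_zero]
    rw [h0]
    have hsplit : ∑ k ∈ range (N+1), G q (N+1) (k+1) * P q x (k+1)
        = x * (∑ k ∈ range (N+1), G q N k * P q x k)
          - (∑ k ∈ range (N+1), (q:ℚ)^k * (G q N k * P q x k))
          + ∑ k ∈ range (N+1), (q:ℚ)^(k+1) * (G q N (k+1) * P q x (k+1)) := by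
      rw [Finset.mul_sum, ← Finset.sum_sub_distrib, ← Finset.sum_add_distrib]
      refine Finset.sum_congr rfl fun k hk => ?_
      have hkN : k ≤ N := Finset.mem_range_succ_iff.mp hk
      rw [pascal q N k hq hkN, P_succ]
      ring
    have hF : ∑ k ∈ range (N+1), (q:ℚ)^(k+1) * (G q N (k+1) * P q x (k+1))
        = (∑ k ∈ range (N+1), (q:ℚ)^k * (G q N k * P q x k)) - 1 := by
      have h1 := Finset.sum_range_succ' (fun j => (q:ℚ)^j * (G q N j * P q x j)) (N+1)
      have h2 := Finset.sum_range_succ (fun j => (q:ℚ)^j * (G q N j * P q x j)) (N+1)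
      simp only [G_top, G_zero, P_zero, pow_zero, mul_zero, zero_mul, mul_one,
        add_zero, one_mul] at h1 h2
      rw [h2] at h1
      linarith
    rw [hsplit, hF, ih]
    ring

private lemma tele (q : ℕ) (N j : ℕ) :
    ∀ n, N ≤ n →
    (∏ i ∈ range j, ((q:ℚ)^(n-i)-1)) * ∏ i ∈ Icc (N+1) n, ((q:ℚ)^(i-j)-1)
      = (∏ i ∈ range j, ((q:ℚ)^(N-i)-1)) * ∏ i ∈ Icc (N+1) n, ((q:ℚ)^i-1) := by
  intro n hn
  induction n, hn using Nat.le_induction with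
  | base => rw [Finset.Icc_eq_empty (by omega)]; simp
  | succ n hn ih =>
    rw [Finset.prod_Icc_succ_top (by omega : N+1 ≤ n+1) (fun i => ((q:ℚ)^(i-j)-1)),
      Finset.prod_Icc_succ_top (by omega : N+1 ≤ n+1) (fun i => ((q:ℚ)^i-1))]
    have hshift : (∏ i ∈ range j, ((q:ℚ)^(n+1-i)-1)) * ((q:ℚ)^(n+1-j)-1)
        = ((q:ℚ)^(n+1)-1) * ∏ i ∈ range j, ((q:ℚ)^(n-i)-1) := by
      have h1 := Finset.prod_range_succ (fun i => ((q:ℚ)^(n+1-i)-1)) j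
      have h2 := Finset.prod_range_succ' (fun i => ((q:ℚ)^(n+1-i)-1)) j
      simp only [Nat.succ_sub_succ, Nat.sub_zero] at h2
      rw [← h1, h2]
      ring
    linear_combination (∏ i ∈ Icc (N+1) n, ((q:ℚ)^(i-j)-1)) * hshift
      + ((q:ℚ)^(n+1)-1) * ih

/-- `∑_{j=0}^{n-d+1} ( m(θ_j) · ∏_{i=n-d+2}^{n} (q^{i-j}-1)/(q^i-1) ) = q^{m(n-d+1)}`,
where `m(θ_j) = ∏_{i=0}^{j-1} ((q^{n-i}-1)(q^m-q^i))/(q^{i+1}-1)` are the eigenvalue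
multiplicities of the bilinear forms graph `Bil_q(n,m)`. -/
theorem multiplicity_interpolation_sum (q m n d : ℕ) (hq : 2 ≤ q) (hd : 1 ≤ d)
    (hdn : d - 1 ≤ n) (hnm : n ≤ m) :
    ∑ j ∈ Finset.range (n + 2 - d),
      ((∏ i ∈ Finset.range j,
          (((q : ℚ) ^ (n - i) - 1) * ((q : ℚ) ^ m - (q : ℚ) ^ i)) / ((q : ℚ) ^ (i + 1) - 1)) *
        ∏ i ∈ Finset.Icc (n + 2 - d) n, ((q : ℚ) ^ (i - j) - 1) / ((q : ℚ) ^ i - 1)) =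
      (q : ℚ) ^ (m * (n + 1 - d)) := by
  have hNd : n + 2 - d = (n + 1 - d) + 1 := by omega
  set N := n + 1 - d with hNdef
  have hNn : N ≤ n := by omega
  rw [hNd]
  have hterm : ∀ j ∈ Finset.range (N+1),
      ((∏ i ∈ Finset.range j,
          (((q : ℚ) ^ (n - i) - 1) * ((q : ℚ) ^ m - (q : ℚ) ^ i)) / ((q : ℚ) ^ (i + 1) - 1)) *
        ∏ i ∈ Finset.Icc (N + 1) n, ((q : ℚ) ^ (i - j) - 1) / ((q : ℚ) ^ i - 1))
      = G q N j * P q ((q:ℚ)^m) j := by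
    intro j hj
    have hjN : j ≤ N := Finset.mem_range_succ_iff.mp hj
    have htele := tele q N j n hNn
    have hB : (∏ i ∈ Icc (N+1) n, ((q:ℚ)^i-1)) ≠ 0 :=
      Finset.prod_ne_zero_iff.mpr fun i hi =>
        aux_ne q i hq (by have := (Finset.mem_Icc.mp hi).1; omega)
    have hD : (∏ i ∈ range j, ((q:ℚ)^(i+1)-1)) ≠ 0 :=
      Finset.prod_ne_zero_iff.mpr fun i _ => aux_ne q (i+1) hq (by omega)
    unfold G P
    rw [prod_div_distrib, prod_div_distrib, prod_div_distrib, prod_mul_distrib]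
    rw [div_mul_div_comm, div_mul_eq_mul_div,
      div_eq_div_iff (mul_ne_zero hD hB) hD]
    linear_combination ((∏ i ∈ range j, ((q:ℚ)^(i+1)-1)) *
      ∏ i ∈ range j, ((q:ℚ)^m - (q:ℚ)^i)) * htele
  rw [Finset.sum_congr rfl hterm, key_sum q hq ((q:ℚ)^m) N, ← pow_mul]
end

section
/- Let q be a power of a prime p, m ≥ n ≥ 1, t ≥ 2, and suppose t ≢ 1 (mod p). Then V_1 = ((q^n−1)/(q−1))(q^m−1) + (t−1)(q−1) + 1 is not divisible by p. Consequently there is no additive perfect sum-rank code of minimum distance 3 or 4 in F_q^{n×m} × F_q^{t−1}. -/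
open Finset

set_option linter.unusedSectionVars false

section aux
variable {K : Type*} [Field K] [Fintype K] [DecidableEq K] {n m : ℕ}

lemma aux_rank_vecMulVec (u : Fin n → K) (w : Fin m → K) :
    (Matrix.vecMulVec u w).rank ≤ 1 := by
  rw [Matrix.rank]
  have hr : LinearMap.range (Matrix.vecMulVec u w).mulVecLin ≤ Submodule.span K {u} := by
    rintro x ⟨y, rfl⟩
    have hx : (Matrix.vecMulVec u w).mulVecLin y = (∑ j, w j * y j) • u := by
      ext i
      simp only [Matrix.mulVecLin_apply, Matrix.mulVec, dotProduct,
        Matrix.vecMulVec_apply, Pi.smul_apply, smul_eq_mul, Finset.sum_mul]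
      exact Finset.sum_congr rfl fun j _ => by ring
    rw [hx]
    exact Submodule.smul_mem _ _ (Submodule.mem_span_singleton_self u)
  refine le_trans (Submodule.finrank_mono hr) ?_
  by_cases hu : u = 0
  · rw [hu, Submodule.span_zero_singleton]
    simp
  · rw [finrank_span_singleton hu]

lemma aux_rank_eq_zero {A : Matrix (Fin n) (Fin m) K} : A.rank = 0 ↔ A = 0 := by
  constructor
  · intro h
    have h0 : LinearMap.range A.mulVecLin = ⊥ := Submodule.finrank_eq_zero.mp h
    rw [LinearMap.range_eq_bot] at h0
    ext i j
    have := congrFun (congrArg (fun f : ((Fin m → K) →ₗ[K] (Fin n → K)) =>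
      f (Pi.single j 1)) h0) i
    simpa [Matrix.mulVecLin_apply] using this
  · rintro rfl
    exact Matrix.rank_zero

lemma aux_exists_vecMulVec {A : Matrix (Fin n) (Fin m) K} (h : A.rank ≤ 1) :
    ∃ u w, A = Matrix.vecMulVec u w := by
  have h' : Module.finrank K (LinearMap.range A.mulVecLin) ≤ 1 := h
  obtain ⟨v, hv⟩ := finrank_le_one_iff.mp h'
  have hw : ∀ j : Fin m, ∃ c : K, c • (v : Fin n → K) = fun i => A i j := by
    intro j
    have hmem : (fun i => A i j) ∈ LinearMap.range A.mulVecLin :=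
      ⟨Pi.single j 1, by simp [Matrix.mulVecLin_apply]; rfl⟩
    obtain ⟨c, hc⟩ := hv ⟨_, hmem⟩
    exact ⟨c, congrArg Subtype.val hc⟩
  choose w hwspec using hw
  refine ⟨(v : Fin n → K), w, ?_⟩
  ext i j
  have := congrFun (hwspec j) i
  simp only [Pi.smul_apply, smul_eq_mul] at this
  rw [Matrix.vecMulVec_apply, ← this]
  ring

lemma aux_fiber_card {A : Matrix (Fin n) (Fin m) K} (hA : A.rank ≤ 1) (h0 : A ≠ 0)
    (hex : ∃ u w, A = Matrix.vecMulVec u w) :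
    (univ.filter fun uw : (Fin n → K) × (Fin m → K) =>
      Matrix.vecMulVec uw.1 uw.2 = A).card = (univ.erase (0:K)).card := by
  obtain ⟨u₀, w₀, rfl⟩ := hex
  obtain ⟨i₀, j₀, hij⟩ : ∃ i j, u₀ i * w₀ j ≠ 0 := by
    by_contra hcon
    push_neg at hcon
    exact h0 (by ext i j; simpa [Matrix.vecMulVec_apply] using hcon i j)
  have hu0 : u₀ i₀ ≠ 0 := left_ne_zero_of_mul hij
  have hw0 : w₀ j₀ ≠ 0 := right_ne_zero_of_mul hij
  have hent : ∀ uw : (Fin n → K) × (Fin m → K),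
      Matrix.vecMulVec uw.1 uw.2 = Matrix.vecMulVec u₀ w₀ →
      ∀ i j, uw.1 i * uw.2 j = u₀ i * w₀ j := by
    intro uw huw i j
    have := congrFun (congrFun huw i) j
    simpa [Matrix.vecMulVec_apply] using this
  refine Finset.card_bij' (fun uw _ => uw.1 i₀ * (u₀ i₀)⁻¹)
    (fun c _ => (c • u₀, c⁻¹ • w₀)) ?_ ?_ ?_ ?_
  · intro uw huw
    rw [mem_filter] at huw
    have h1 := hent uw huw.2 i₀ j₀
    have hui : uw.1 i₀ ≠ 0 := by
      intro hz
      rw [hz, zero_mul] at h1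
      exact hij h1.symm
    exact mem_erase.mpr ⟨mul_ne_zero hui (inv_ne_zero hu0), mem_univ _⟩
  · intro c hc
    have hcz : c ≠ 0 := (mem_erase.mp hc).1
    refine mem_filter.mpr ⟨mem_univ _, ?_⟩
    ext i j
    simp only [Matrix.vecMulVec_apply, Pi.smul_apply, smul_eq_mul]
    field_simp
  · intro uw huw
    rw [mem_filter] at huw
    have h2 := hent uw huw.2 i₀ j₀
    have hui : uw.1 i₀ ≠ 0 := by
      intro hz; rw [hz, zero_mul] at h2; exact hij h2.symm
    have hwj : uw.2 j₀ ≠ 0 := by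
      intro hz; rw [hz, mul_zero] at h2; exact hij h2.symm
    ext x
    · simp only [Pi.smul_apply, smul_eq_mul]
      have e1 := hent uw huw.2 x j₀
      have key : uw.1 x * u₀ i₀ = uw.1 i₀ * u₀ x := by
        have h3 : uw.1 x * u₀ i₀ * w₀ j₀ = uw.1 i₀ * u₀ x * w₀ j₀ := by
          linear_combination uw.1 i₀ * e1 - uw.1 x * h2
        exact mul_right_cancel₀ hw0 h3
      field_simp
      linear_combination -key
    · simp only [Pi.smul_apply, smul_eq_mul]
      have e2 := hent uw huw.2 i₀ x
      field_simp
      linear_combination -e2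
  · intro c hc
    have hcz : c ≠ 0 := (mem_erase.mp hc).1
    simp only [Pi.smul_apply, smul_eq_mul]
    field_simp

lemma aux_vecMulVec_eq_zero (u : Fin n → K) (w : Fin m → K) :
    Matrix.vecMulVec u w = 0 ↔ u = 0 ∨ w = 0 := by
  constructor
  · intro h
    by_contra hcon
    push_neg at hcon
    obtain ⟨i, hi⟩ := Function.ne_iff.mp hcon.1
    obtain ⟨j, hj⟩ := Function.ne_iff.mp hcon.2
    have := congrFun (congrFun h i) j
    rw [Matrix.vecMulVec_apply] at this
    simp only [Pi.zero_apply] at hi hj this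
    exact mul_ne_zero hi hj this
  · rintro (rfl | rfl) <;> ext i j <;> simp [Matrix.vecMulVec_apply]

lemma aux_card_rank_le_one (p : ℕ) (hq0 : ((Fintype.card K : ℕ) : ZMod p) = 0)
    (hn : 1 ≤ n) (hm : 1 ≤ m) :
    (((univ.filter fun A : Matrix (Fin n) (Fin m) K => A.rank ≤ 1).card : ℕ) : ZMod p) = 0 := by
  set T := univ.filter fun A : Matrix (Fin n) (Fin m) K => A.rank ≤ 1 with hT
  have h0T : (0 : Matrix (Fin n) (Fin m) K) ∈ T :=
    mem_filter.mpr ⟨mem_univ _, by rw [Matrix.rank_zero]; omega⟩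
  have hmem : ∀ uw : (Fin n → K) × (Fin m → K), Matrix.vecMulVec uw.1 uw.2 ∈ T :=
    fun uw => mem_filter.mpr ⟨mem_univ _, aux_rank_vecMulVec _ _⟩
  have hsum := Finset.card_eq_sum_card_fiberwise
    (f := fun uw : (Fin n → K) × (Fin m → K) => Matrix.vecMulVec uw.1 uw.2)
    (s := univ) (t := T) (fun x _ => hmem x)
  rw [← Finset.add_sum_erase T _ h0T] at hsum
  have hfib : ∀ A ∈ T.erase 0,
      (univ.filter fun uw : (Fin n → K) × (Fin m → K) =>
        Matrix.vecMulVec uw.1 uw.2 = A).card = (univ.erase (0:K)).card := by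
    intro A hA
    have h1 : A.rank ≤ 1 := (mem_filter.mp (mem_of_mem_erase hA)).2
    exact aux_fiber_card h1 (ne_of_mem_erase hA) (aux_exists_vecMulVec h1)
  rw [Finset.sum_congr rfl hfib, Finset.sum_const, smul_eq_mul] at hsum
  have hsplit := Finset.card_filter_add_card_filter_not
    (s := (univ : Finset ((Fin n → K) × (Fin m → K))))
    (p := fun uw => Matrix.vecMulVec uw.1 uw.2 = 0)
  have hneg : (univ.filter fun uw : (Fin n → K) × (Fin m → K) =>
      ¬ Matrix.vecMulVec uw.1 uw.2 = 0).card
      = (univ.erase (0 : Fin n → K)).card * (univ.erase (0 : Fin m → K)).card := by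
    have heq : (univ.filter fun uw : (Fin n → K) × (Fin m → K) =>
        ¬ Matrix.vecMulVec uw.1 uw.2 = 0)
        = univ.filter fun uw : (Fin n → K) × (Fin m → K) =>
          (fun u => u ≠ 0) uw.1 ∧ (fun w => w ≠ 0) uw.2 := by
      apply Finset.filter_congr
      intro uw _
      rw [aux_vecMulVec_eq_zero]
      tauto
    have hfp := Finset.filter_product (s := (univ : Finset (Fin n → K)))
      (t := (univ : Finset (Fin m → K)))
      (fun u : Fin n → K => u ≠ 0) (fun w : Fin m → K => w ≠ 0)
    rw [Finset.univ_product_univ] at hfp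
    rw [heq, hfp, Finset.card_product, Finset.filter_ne', Finset.filter_ne']
  rw [hneg, card_univ] at hsplit
  -- cardinalities
  have hcu : Fintype.card ((Fin n → K) × (Fin m → K))
      = Fintype.card K ^ n * Fintype.card K ^ m := by
    simp [Fintype.card_fun]
  have hEn : (univ.erase (0 : Fin n → K)).card + 1 = Fintype.card K ^ n := by
    rw [card_erase_of_mem (mem_univ _), card_univ]
    have h1 : 1 ≤ Fintype.card (Fin n → K) := Fintype.card_pos
    have h2 : Fintype.card (Fin n → K) = Fintype.card K ^ n := by
      simp [Fintype.card_fun]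
    omega
  have hEm : (univ.erase (0 : Fin m → K)).card + 1 = Fintype.card K ^ m := by
    rw [card_erase_of_mem (mem_univ _), card_univ]
    have h1 : 1 ≤ Fintype.card (Fin m → K) := Fintype.card_pos
    have h2 : Fintype.card (Fin m → K) = Fintype.card K ^ m := by
      simp [Fintype.card_fun]
    omega
  have hEK : (univ.erase (0 : K)).card + 1 = Fintype.card K := by
    rw [card_erase_of_mem (mem_univ _), card_univ]
    have : 1 ≤ Fintype.card K := Fintype.card_pos
    omega
  have hTe : T.card = (T.erase 0).card + 1 := by
    have h1 : 1 ≤ T.card := Finset.card_pos.mpr ⟨0, h0T⟩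
    rw [card_erase_of_mem h0T]
    omega
  rw [card_univ, hcu] at hsum
  rw [hcu] at hsplit
  -- cast everything
  have hqn : ((Fintype.card K : ZMod p)) ^ n = 0 := by rw [hq0, zero_pow (by omega)]
  have hqm : ((Fintype.card K : ZMod p)) ^ m = 0 := by rw [hq0, zero_pow (by omega)]
  have cEn : (((univ.erase (0 : Fin n → K)).card : ℕ) : ZMod p) = -1 := by
    have h := congrArg (Nat.cast : ℕ → ZMod p) hEn
    push_cast at h
    rw [hqn] at h
    linear_combination h
  have cEm : (((univ.erase (0 : Fin m → K)).card : ℕ) : ZMod p) = -1 := by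
    have h := congrArg (Nat.cast : ℕ → ZMod p) hEm
    push_cast at h
    rw [hqm] at h
    linear_combination h
  have cEK : (((univ.erase (0 : K)).card : ℕ) : ZMod p) = -1 := by
    have h := congrArg (Nat.cast : ℕ → ZMod p) hEK
    push_cast at h
    rw [hq0] at h
    linear_combination h
  have cF0 : (((univ.filter fun uw : (Fin n → K) × (Fin m → K) =>
      Matrix.vecMulVec uw.1 uw.2 = 0).card : ℕ) : ZMod p) = -1 := by
    have h := congrArg (Nat.cast : ℕ → ZMod p) hsplit
    push_cast at h
    rw [hqn, hqm, cEn, cEm] at h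
    linear_combination h
  have cb : (((T.erase 0).card : ℕ) : ZMod p) = -1 := by
    have h := congrArg (Nat.cast : ℕ → ZMod p) hsum
    push_cast at h
    rw [hqn, hqm, cEK, cF0] at h
    linear_combination h
  have h := congrArg (Nat.cast : ℕ → ZMod p) hTe
  push_cast at h
  rw [cb] at h
  linear_combination h
end aux

section auxv
variable {K : Type*} [Field K] [Fintype K] [DecidableEq K] {s : ℕ}

lemma aux_single_norm (i : Fin s) (c : K) : hammingNorm (Pi.single i c : Fin s → K) ≤ 1 := by
  rw [hammingNorm]
  refine le_trans (Finset.card_le_card ?_) (le_of_eq (Finset.card_singleton i))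
  intro j hj
  simp only [Finset.mem_filter, Finset.mem_univ, true_and] at hj
  rw [Finset.mem_singleton]
  by_contra hne
  exact hj (by rw [Pi.single_eq_of_ne hne])

lemma aux_single_zero_iff (i : Fin s) (c : K) : (Pi.single i c : Fin s → K) = 0 ↔ c = 0 := by
  constructor
  · intro h
    have := congrFun h i
    simpa [Pi.single_eq_same] using this
  · rintro rfl
    exact Pi.single_zero i

lemma aux_wt_le_one {v : Fin s → K} (hs : 1 ≤ s) (h : hammingNorm v ≤ 1) :
    ∃ i c, v = Pi.single i c := by
  by_cases hv : v = 0
  · exact ⟨⟨0, hs⟩, 0, by rw [hv, Pi.single_zero]⟩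
  · obtain ⟨i, hi⟩ := Function.ne_iff.mp hv
    simp only [Pi.zero_apply] at hi
    refine ⟨i, v i, ?_⟩
    ext j
    rcases eq_or_ne j i with rfl | hji
    · rw [Pi.single_eq_same]
    · rw [Pi.single_eq_of_ne hji]
      by_contra hvj
      have h2 : 2 ≤ hammingNorm v := by
        rw [hammingNorm]
        have hsub : ({i, j} : Finset (Fin s)) ⊆ univ.filter fun k => v k ≠ 0 := by
          intro k hk
          simp only [Finset.mem_insert, Finset.mem_singleton] at hk
          rcases hk with rfl | rfl <;>
            simp only [Finset.mem_filter, Finset.mem_univ, true_and]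
          · exact hi
          · exact hvj
        calc 2 = ({i, j} : Finset (Fin s)).card := by
              rw [Finset.card_insert_of_notMem (by simpa using (Ne.symm hji)),
                Finset.card_singleton]
          _ ≤ _ := Finset.card_le_card hsub
      omega

lemma aux_card_wt_le_one (p : ℕ) (hq0 : ((Fintype.card K : ℕ) : ZMod p) = 0) (hs : 1 ≤ s) :
    (((univ.filter fun v : Fin s → K => hammingNorm v ≤ 1).card : ℕ) : ZMod p)
      = 1 - (s : ZMod p) := by
  set T := univ.filter fun v : Fin s → K => hammingNorm v ≤ 1 with hT
  have h0T : (0 : Fin s → K) ∈ T :=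
    mem_filter.mpr ⟨mem_univ _, by rw [hammingNorm_zero]; omega⟩
  have hmem : ∀ ic : Fin s × K, Pi.single ic.1 ic.2 ∈ T :=
    fun ic => mem_filter.mpr ⟨mem_univ _, aux_single_norm _ _⟩
  have hsum := Finset.card_eq_sum_card_fiberwise
    (f := fun ic : Fin s × K => (Pi.single ic.1 ic.2 : Fin s → K))
    (s := univ) (t := T) (fun x _ => hmem x)
  rw [← Finset.add_sum_erase T _ h0T] at hsum
  have hfib : ∀ v ∈ T.erase 0,
      (univ.filter fun ic : Fin s × K => (Pi.single ic.1 ic.2 : Fin s → K) = v).card = 1 := by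
    intro v hv
    have hv0 : v ≠ 0 := ne_of_mem_erase hv
    have hwt : hammingNorm v ≤ 1 := (mem_filter.mp (mem_of_mem_erase hv)).2
    obtain ⟨i, c, rfl⟩ := aux_wt_le_one hs hwt
    have hc : c ≠ 0 := fun h => hv0 ((aux_single_zero_iff i c).mpr h)
    rw [Finset.card_eq_one]
    refine ⟨(i, c), ?_⟩
    ext ⟨i', c'⟩
    simp only [Finset.mem_filter, Finset.mem_univ, true_and, Finset.mem_singleton,
      Prod.mk.injEq]
    constructor
    · intro h
      have hc' : c' ≠ 0 := by
        rintro rfl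
        rw [Pi.single_zero] at h
        exact hv0 h.symm
      have hii : i' = i := by
        by_contra hne
        have := congrFun h i'
        rw [Pi.single_eq_same, Pi.single_eq_of_ne hne] at this
        exact hc' this
      subst hii
      have := congrFun h i'
      rw [Pi.single_eq_same, Pi.single_eq_same] at this
      exact ⟨rfl, this⟩
    · rintro ⟨rfl, rfl⟩
      rfl
  rw [Finset.sum_congr rfl hfib, Finset.sum_const, smul_eq_mul, mul_one] at hsum
  have hF0 : (univ.filter fun ic : Fin s × K => (Pi.single ic.1 ic.2 : Fin s → K) = 0).card = s := by
    have hb : (univ.filter fun ic : Fin s × K =>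
        (Pi.single ic.1 ic.2 : Fin s → K) = 0).card = (univ : Finset (Fin s)).card := by
      refine Finset.card_bij' (fun ic _ => ic.1) (fun i _ => (i, 0)) (fun _ _ => mem_univ _)
        ?_ ?_ ?_
      · intro i _
        exact mem_filter.mpr ⟨mem_univ _, Pi.single_zero i⟩
      · intro ic hic
        have h2 : ic.2 = 0 := (aux_single_zero_iff ic.1 ic.2).mp (mem_filter.mp hic).2
        rw [Prod.ext_iff]
        exact ⟨rfl, h2.symm⟩
      · intro i _
        rfl
    rw [hb, card_univ, Fintype.card_fin]
  rw [hF0, card_univ] at hsum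
  have hTe : T.card = (T.erase 0).card + 1 := by
    have h1 : 1 ≤ T.card := Finset.card_pos.mpr ⟨0, h0T⟩
    rw [card_erase_of_mem h0T]
    omega
  have hcard : Fintype.card (Fin s × K) = s * Fintype.card K := by
    simp [Fintype.card_prod]
  rw [hcard] at hsum
  have h := congrArg (Nat.cast : ℕ → ZMod p) hsum
  push_cast at h
  rw [hq0] at h
  have h2 := congrArg (Nat.cast : ℕ → ZMod p) hTe
  push_cast at h2
  rw [h2]
  linear_combination -h
end auxv




/-- The sum-rank weight of an element of `F_q^{n×m} × F_q^{t-1}`. -/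
noncomputable def srkWt {K : Type*} [Field K] [Fintype K] [DecidableEq K]
    {n m s : ℕ} (x : Matrix (Fin n) (Fin m) K × (Fin s → K)) : ℕ :=
  x.1.rank + hammingNorm x.2

/-- If `q` is a power of the prime `p`, `m ≥ n ≥ 1`, `t ≥ 2` and `t ≢ 1 (mod p)`, then
`V_1 = ((q^n-1)/(q-1))(q^m-1) + (t-1)(q-1) + 1` is not divisible by `p`; consequently
there is no nontrivial additive perfect sum-rank code of minimum distance `3` or `4`
in `F_q^{n×m} × F_q^{t-1}`. -/
theorem no_additive_perfect_code (p : ℕ) (hp : p.Prime) (q t m n : ℕ)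
    (hq : ∃ k, 1 ≤ k ∧ q = p ^ k) (hn : 1 ≤ n) (hnm : n ≤ m) (ht : 2 ≤ t)
    (htp : ¬ t ≡ 1 [MOD p])
    (K : Type) [Field K] [Fintype K] [DecidableEq K] (hK : Fintype.card K = q) :
    ¬ p ∣ ((q ^ n - 1) / (q - 1) * (q ^ m - 1) + (t - 1) * (q - 1) + 1) ∧
      ∀ d ∈ ({3, 4} : Set ℕ),
        ¬ ∃ C : AddSubgroup (Matrix (Fin n) (Fin m) K × (Fin (t - 1) → K)),
          Nat.card C ≠ 1 ∧ (∀ x ∈ C, x ≠ 0 → d ≤ srkWt x) ∧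
          Nat.card C *
              Nat.card {x : Matrix (Fin n) (Fin m) K × (Fin (t - 1) → K) // srkWt x ≤ 1} =
            q ^ (m * n + t - 1) := by
  classical
  obtain ⟨k, hk1, hqpk⟩ := hq
  have hp2 : 2 ≤ p := hp.two_le
  have hq2 : 2 ≤ q := le_trans hp2 (by rw [hqpk]; exact Nat.le_self_pow (by omega) p)
  haveI : NeZero p := ⟨by omega⟩
  have hq0 : ((q : ℕ) : ZMod p) = 0 := by
    rw [hqpk]
    push_cast
    rw [ZMod.natCast_self, zero_pow (by omega)]
  have hqn0 : ((q ^ n : ℕ) : ZMod p) = 0 := by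
    push_cast
    rw [hq0, zero_pow (by omega)]
  have hqm0 : ((q ^ m : ℕ) : ZMod p) = 0 := by
    push_cast
    rw [hq0, zero_pow (by omega)]
  have ht1c : ((t - 1 : ℕ) : ZMod p) = (t : ZMod p) - 1 := by
    rw [Nat.cast_sub (by omega), Nat.cast_one]
  have h1mt : (1 : ZMod p) - (t : ZMod p) ≠ 0 := by
    intro h
    apply htp
    have htt : ((t : ℕ) : ZMod p) = ((1 : ℕ) : ZMod p) := by
      push_cast
      linear_combination -h
    exact (ZMod.natCast_eq_natCast_iff _ _ _).mp htt
  have hc1 : ((q - 1 : ℕ) : ZMod p) = -1 := by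
    rw [Nat.cast_sub (by omega), Nat.cast_one, hq0]
    ring
  have hcn : ((q ^ n - 1 : ℕ) : ZMod p) = -1 := by
    rw [Nat.cast_sub (Nat.one_le_pow _ _ (by omega)), Nat.cast_one, hqn0]
    ring
  have hcm : ((q ^ m - 1 : ℕ) : ZMod p) = -1 := by
    rw [Nat.cast_sub (Nat.one_le_pow _ _ (by omega)), Nat.cast_one, hqm0]
    ring
  have hDc : (((q ^ n - 1) / (q - 1) : ℕ) : ZMod p) = 1 := by
    have hD : (q ^ n - 1) / (q - 1) * (q - 1) = q ^ n - 1 :=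
      Nat.div_mul_cancel (by simpa using Nat.sub_dvd_pow_sub_pow q 1 n)
    have h := congrArg (Nat.cast : ℕ → ZMod p) hD
    rw [Nat.cast_mul, hc1, hcn] at h
    linear_combination -h
  constructor
  · intro hdvd
    have h0 : (((q ^ n - 1) / (q - 1) * (q ^ m - 1) + (t - 1) * (q - 1) + 1 : ℕ) : ZMod p) = 0 :=
      (ZMod.natCast_eq_zero_iff _ p).mpr hdvd
    rw [Nat.cast_add, Nat.cast_add, Nat.cast_mul, Nat.cast_mul, Nat.cast_one,
      hDc, hcm, ht1c, hc1] at h0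
    exact h1mt (by linear_combination h0)
  · rintro d hd ⟨C, hC1, hmin, heq⟩
    have hq0' : ((Fintype.card K : ℕ) : ZMod p) = 0 := by rw [hK]; exact hq0
    set B := Nat.card {x : Matrix (Fin n) (Fin m) K × (Fin (t - 1) → K) // srkWt x ≤ 1} with hB
    have hBf : B = (univ.filter fun x : Matrix (Fin n) (Fin m) K × (Fin (t - 1) → K) =>
        srkWt x ≤ 1).card := by
      rw [hB, Nat.card_eq_fintype_card, Fintype.card_subtype]
    -- split the ball
    have hsplit : (univ.filter fun x : Matrix (Fin n) (Fin m) K × (Fin (t - 1) → K) =>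
          srkWt x ≤ 1)
        = (univ.filter fun x : Matrix (Fin n) (Fin m) K × (Fin (t - 1) → K) =>
            (fun A : Matrix (Fin n) (Fin m) K => A = 0) x.1 ∧
            (fun v : Fin (t - 1) → K => hammingNorm v ≤ 1) x.2)
          ∪ (univ.filter fun x : Matrix (Fin n) (Fin m) K × (Fin (t - 1) → K) =>
            (fun A : Matrix (Fin n) (Fin m) K => ¬ A = 0 ∧ A.rank ≤ 1) x.1 ∧
            (fun v : Fin (t - 1) → K => v = 0) x.2) := by
      ext x
      simp only [mem_filter, mem_union, mem_univ, true_and]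
      unfold srkWt
      constructor
      · intro h
        by_cases hx1 : x.1 = 0
        · left
          refine ⟨hx1, ?_⟩
          rw [hx1, Matrix.rank_zero] at h
          omega
        · right
          have hr : x.1.rank ≠ 0 := fun h0 => hx1 (aux_rank_eq_zero.mp h0)
          have hw : hammingNorm x.2 = 0 := by omega
          exact ⟨⟨hx1, by omega⟩, hammingNorm_eq_zero.mp hw⟩
      · rintro (⟨h1, h2⟩ | ⟨⟨h1, h2⟩, h3⟩)
        · rw [h1, Matrix.rank_zero]
          omega
        · rw [h3, hammingNorm_zero]
          omega
    have hdisj : Disjoint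
        (univ.filter fun x : Matrix (Fin n) (Fin m) K × (Fin (t - 1) → K) =>
            (fun A : Matrix (Fin n) (Fin m) K => A = 0) x.1 ∧
            (fun v : Fin (t - 1) → K => hammingNorm v ≤ 1) x.2)
        (univ.filter fun x : Matrix (Fin n) (Fin m) K × (Fin (t - 1) → K) =>
            (fun A : Matrix (Fin n) (Fin m) K => ¬ A = 0 ∧ A.rank ≤ 1) x.1 ∧
            (fun v : Fin (t - 1) → K => v = 0) x.2) := by
      rw [Finset.disjoint_left]
      intro a ha hb
      rw [mem_filter] at ha hb
      exact hb.2.1.1 ha.2.1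
    have hBcard : B = (univ.filter fun v : Fin (t - 1) → K => hammingNorm v ≤ 1).card
        + ((univ.filter fun A : Matrix (Fin n) (Fin m) K => A.rank ≤ 1).erase 0).card := by
      rw [hBf, hsplit, Finset.card_union_of_disjoint hdisj]
      congr 1
      · have hfp := Finset.filter_product (s := (univ : Finset (Matrix (Fin n) (Fin m) K)))
          (t := (univ : Finset (Fin (t - 1) → K)))
          (fun A : Matrix (Fin n) (Fin m) K => A = 0)
          (fun v : Fin (t - 1) → K => hammingNorm v ≤ 1)
        rw [Finset.univ_product_univ] at hfp
        rw [hfp, Finset.card_product, Finset.filter_eq']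
        simp
      · have hfp := Finset.filter_product (s := (univ : Finset (Matrix (Fin n) (Fin m) K)))
          (t := (univ : Finset (Fin (t - 1) → K)))
          (fun A : Matrix (Fin n) (Fin m) K => ¬ A = 0 ∧ A.rank ≤ 1)
          (fun v : Fin (t - 1) → K => v = 0)
        rw [Finset.univ_product_univ] at hfp
        rw [hfp, Finset.card_product, Finset.filter_eq']
        have he : (univ.filter fun A : Matrix (Fin n) (Fin m) K => ¬ A = 0 ∧ A.rank ≤ 1)
            = (univ.filter fun A : Matrix (Fin n) (Fin m) K => A.rank ≤ 1).erase 0 := by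
          ext A
          simp only [mem_filter, mem_erase, mem_univ, true_and]
          try tauto
        rw [he]
        simp
    -- the ball cardinality mod p
    have h0TM : (0 : Matrix (Fin n) (Fin m) K) ∈
        univ.filter fun A : Matrix (Fin n) (Fin m) K => A.rank ≤ 1 :=
      mem_filter.mpr ⟨mem_univ _, by rw [Matrix.rank_zero]; omega⟩
    have hTe : ((univ.filter fun A : Matrix (Fin n) (Fin m) K => A.rank ≤ 1).erase 0).card + 1
        = (univ.filter fun A : Matrix (Fin n) (Fin m) K => A.rank ≤ 1).card := by
      have h1 : 1 ≤ (univ.filter fun A : Matrix (Fin n) (Fin m) K => A.rank ≤ 1).card :=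
        Finset.card_pos.mpr ⟨0, h0TM⟩
      rw [card_erase_of_mem h0TM]
      omega
    have cErase : ((((univ.filter fun A : Matrix (Fin n) (Fin m) K =>
        A.rank ≤ 1).erase 0).card : ℕ) : ZMod p) = -1 := by
      have h := congrArg (Nat.cast : ℕ → ZMod p) hTe
      push_cast at h
      rw [aux_card_rank_le_one p hq0' hn (le_trans hn hnm)] at h
      linear_combination h
    have cB : ((B : ℕ) : ZMod p) = 1 - (t : ZMod p) := by
      have h := congrArg (Nat.cast : ℕ → ZMod p) hBcard
      push_cast at h
      rw [aux_card_wt_le_one p hq0' (s := t - 1) (by omega), cErase] at h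
      rw [h, ht1c]
      ring
    -- B is a power of p, and B ≥ 2
    have hdvdB : B ∣ p ^ (k * (m * n + t - 1)) := by
      refine Dvd.intro_left (Nat.card C) ?_
      rw [heq, hqpk, ← pow_mul]
    obtain ⟨j, hj, hBj⟩ := (Nat.dvd_prime_pow hp).mp hdvdB
    have hB2 : 2 ≤ B := by
      rw [hBf]
      have i0 : Fin (t - 1) := ⟨0, by omega⟩
      set x1 : Matrix (Fin n) (Fin m) K × (Fin (t - 1) → K) :=
        (0, Pi.single i0 1) with hx1
      have hx0mem : (0 : Matrix (Fin n) (Fin m) K × (Fin (t - 1) → K)) ∈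
          univ.filter fun x => srkWt x ≤ 1 := by
        refine mem_filter.mpr ⟨mem_univ _, ?_⟩
        unfold srkWt
        rw [Prod.fst_zero, Prod.snd_zero, Matrix.rank_zero, hammingNorm_zero]
        omega
      have hx1mem : x1 ∈ univ.filter fun x => srkWt x ≤ 1 := by
        refine mem_filter.mpr ⟨mem_univ _, ?_⟩
        unfold srkWt
        rw [hx1]
        simp only [Matrix.rank_zero, zero_add]
        exact aux_single_norm i0 1
      have hne : x1 ≠ 0 := by
        intro h
        have := congrFun (congrArg Prod.snd h) i0
        rw [hx1] at this
        simp [Pi.single_eq_same] at this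
      calc 2 = ({x1, 0} : Finset (Matrix (Fin n) (Fin m) K × (Fin (t - 1) → K))).card := by
            rw [Finset.card_insert_of_notMem (by simpa using hne), Finset.card_singleton]
        _ ≤ _ := by
            apply Finset.card_le_card
            intro y hy
            rcases Finset.mem_insert.mp hy with rfl | hy0
            · exact hx1mem
            · rw [Finset.mem_singleton.mp hy0]
              exact hx0mem
    have hj1 : 1 ≤ j := by
      by_contra hj0
      rw [show j = 0 by omega, pow_zero] at hBj
      omega
    have hpB : p ∣ B := by
      rw [hBj]
      exact dvd_pow_self p (by omega)
    have : ((B : ℕ) : ZMod p) = 0 := (ZMod.natCast_eq_zero_iff _ p).mpr hpB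
    rw [cB] at this
    exact h1mt this
end

section
/- Let X be a real symmetric positive semidefinite N×N matrix with block form X = [[1, yᵀ],[y, Y]] where y has length N−1 and Y_{uu} = y_u for all u. Then the sum of all entries of X is at least (trace X)². -/
/-- If `X` is a real symmetric positive semidefinite `N×N` matrix with `X₀₀ = 1` and
`X₀ᵤ = Xᵤᵤ` for all `u` (i.e. block form `[[1, yᵀ],[y, Y]]` with `Y` having `y` on its
diagonal), then the sum of all entries of `X` is at least `(trace X)²`. -/
theorem sum_entries_ge_trace_sq (N : ℕ) (hN : 0 < N) (X : Matrix (Fin N) (Fin N) ℝ)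
    (hX : X.PosSemidef) (h00 : X ⟨0, hN⟩ ⟨0, hN⟩ = 1)
    (hdiag : ∀ u : Fin N, X ⟨0, hN⟩ u = X u u) :
    X.trace ^ 2 ≤ ∑ u : Fin N, ∑ v : Fin N, X u v := by
  set z0 : Fin N := ⟨0, hN⟩ with hz0
  set t : ℝ := X.trace with ht
  have hsym : ∀ u v, X u v = X v u := by
    intro u v
    have h := hX.1
    rw [Matrix.IsHermitian] at h
    conv_lhs => rw [← h]
    simp [Matrix.conjTranspose_apply]
  have hA : ∑ v : Fin N, X z0 v = t := by
    simp only [ht, Matrix.trace, Matrix.diag]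
    exact Finset.sum_congr rfl fun v _ => hdiag v
  have hB : ∑ u : Fin N, X u z0 = t := by
    rw [← hA]; exact Finset.sum_congr rfl fun u _ => hsym u z0
  have key := hX.dotProduct_mulVec_nonneg (fun u => if u = z0 then 1 - t else 1)
  have hdot : dotProduct (star (fun u => if u = z0 then 1 - t else 1))
      (X.mulVec (fun u => if u = z0 then 1 - t else 1)) =
      ∑ u : Fin N, (if u = z0 then 1 - t else 1) *
        ((∑ v : Fin N, X u v) - t * X u z0) := by
    simp only [dotProduct, Matrix.mulVec, star, Pi.star_apply, star_trivial]
    refine Finset.sum_congr rfl fun u _ => ?_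
    congr 1
    have h1 : ∀ v, X u v * (if v = z0 then 1 - t else 1) =
        X u v - (if v = z0 then t * X u v else 0) := by
      intro v; split <;> ring
    simp only [dotProduct, h1, Finset.sum_sub_distrib, Finset.sum_ite_eq',
      Finset.mem_univ, if_true]
  rw [hdot] at key
  have h2 : ∀ u, (if u = z0 then 1 - t else 1) * ((∑ v : Fin N, X u v) - t * X u z0) =
      ((∑ v : Fin N, X u v) - t * X u z0) -
      (if u = z0 then t * ((∑ v : Fin N, X u v) - t * X u z0) else 0) := by
    intro u; split <;> ring
  rw [Finset.sum_congr rfl fun u _ => h2 u] at key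
  simp only [Finset.sum_sub_distrib, Finset.sum_ite_eq', Finset.mem_univ, if_true,
    Finset.mul_sum] at key
  have hXz0 : X z0 z0 = 1 := h00
  rw [hA, hXz0] at key
  have hsum : ∑ u : Fin N, ∑ v : Fin N, X u v - ∑ u : Fin N, t * X u z0 -
      t * (t - t * 1) = ∑ u : Fin N, ∑ v : Fin N, X u v - t * t := by
    rw [← Finset.mul_sum, hB]; ring
  rw [hsum] at key
  nlinarith [key]
end
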